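/- Let A be an n-dimensional (n ≥ 1) nilpotent non-unital associative algebra over ℂ that is null-filiform, i.e. dim A^i = (n+1) − i for all 1 ≤ i ≤ n+1. Then A has a basis e_1, …, e_n such that e_i·e_j = e_{i+j} whenever i + j ≤ n and e_i·e_j = 0 whenever i + j > n. In particular, up to isomorphism there is a unique n-dimensional null-filiform complex associative algebra. -/

import Mathlib

variable (A : Type*) [NonUnitalRing A] [Module ℂ A] [SMulCommClass ℂ A A] [IsScalarTower ℂ A A]

/-- Product of two submodules of a non-unital algebra:
the span of all pairwise products. -/
def pmul (I J : Submodule ℂ A) : Submodule ℂ A :=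
  Submodule.span ℂ (Set.image2 (· * ·) (I : Set A) (J : Set A))

/-- The series of powers `A^1 = A`, `A^{i+1} = Σ_{k=1}^{i} A^k · A^{i+1-k}`.
(`algPow A 0` is junk, set to `⊤`.) -/
def algPow : ℕ → Submodule ℂ A
  | 0 => ⊤
  | 1 => ⊤
  | n + 2 => ⨆ k : Fin (n + 1), pmul A (algPow (k + 1)) (algPow (n + 1 - k))
  termination_by n => n
  decreasing_by
  · omega
  · omega

/-- An algebra is nilpotent if some power `A^m` (`m ≥ 1`) vanishes. -/
def IsNilpotentAlg : Prop :=
  ∃ m : ℕ, 1 ≤ m ∧ algPow A m = ⊥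

/-- An `n`-dimensional algebra is null-filiform if `dim A^i = (n+1) - i` for `1 ≤ i ≤ n+1`. -/
def NullFiliform (n : ℕ) : Prop :=
  ∀ i, 1 ≤ i → i ≤ n + 1 → Module.finrank ℂ (algPow A i) = n + 1 - i

/-- `e 1, …, e n` is a basis of `A` (indices `1,…,n`). -/
def IsBasisFam (n : ℕ) (e : ℕ → A) : Prop :=
  (LinearIndependent ℂ fun i : Fin n => e (i.1 + 1)) ∧
    Submodule.span ℂ (Set.range fun i : Fin n => e (i.1 + 1)) = ⊤

/-- The null-filiform multiplication table: `e i * e j = e (i+j)` if `i + j ≤ n`,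
and `e i * e j = 0` if `i + j > n`. -/
def NullFiliformTable (n : ℕ) (e : ℕ → A) : Prop :=
  ∀ i j, 1 ≤ i → i ≤ n → 1 ≤ j → j ≤ n →
    e i * e j = if i + j ≤ n then e (i + j) else 0


section Aux

set_option linter.unusedSectionVars false
set_option linter.unusedVariables false

lemma algPow_one : algPow A 1 = ⊤ := by rw [algPow]

lemma algPow_succ' (m : ℕ) :
    algPow A (m + 2) = ⨆ k : Fin (m + 1), pmul A (algPow A (k + 1)) (algPow A (m + 1 - k)) := by
  rw [algPow]

lemma mem_pmul {I J : Submodule ℂ A} {a b : A} (ha : a ∈ I) (hb : b ∈ J) :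
    a * b ∈ pmul A I J :=
  Submodule.subset_span ⟨a, ha, b, hb, rfl⟩

lemma pmul_le {I J K : Submodule ℂ A} :
    pmul A I J ≤ K ↔ ∀ a ∈ I, ∀ b ∈ J, a * b ∈ K := by
  constructor
  · exact fun h a ha b hb => h (mem_pmul A ha hb)
  · intro h
    refine Submodule.span_le.2 ?_
    rintro _ ⟨a, ha, b, hb, rfl⟩
    exact h a ha b hb

lemma pmul_mono {I I' J J' : Submodule ℂ A} (h1 : I ≤ I') (h2 : J ≤ J') :
    pmul A I J ≤ pmul A I' J' :=
  (pmul_le A).2 fun a ha b hb => mem_pmul A (h1 ha) (h2 hb)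

lemma pmul_algPow_le {a b : ℕ} (ha : 1 ≤ a) (hb : 1 ≤ b) :
    pmul A (algPow A a) (algPow A b) ≤ algPow A (a + b) := by
  obtain ⟨m, hm⟩ : ∃ m, a + b = m + 2 := ⟨a + b - 2, by omega⟩
  rw [hm, algPow_succ']
  have hk : a - 1 < m + 1 := by omega
  have h := le_iSup (fun k : Fin (m + 1) => pmul A (algPow A (k + 1)) (algPow A (m + 1 - k)))
    ⟨a - 1, hk⟩
  simpa [show a - 1 + 1 = a by omega, show m + 1 - (a - 1) = b by omega] using h

lemma algPow_succ_le : ∀ i, 1 ≤ i → algPow A (i + 1) ≤ algPow A i := by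
  intro i
  induction i using Nat.strong_induction_on with
  | _ i ih =>
    intro hi
    match i, hi with
    | 1, _ => rw [algPow_one]; exact le_top
    | (j + 2), _ =>
      rw [show j + 2 + 1 = (j + 1) + 2 by omega, algPow_succ' A (j + 1)]
      apply iSup_le
      intro k
      by_cases hk : (k : ℕ) = j + 1
      · have h1 : algPow A (k + 1) ≤ algPow A (j + 1) := by
          rw [hk]; exact ih (j + 1) (by omega) (by omega)
        have h2 : (j : ℕ) + 1 + 1 - (k : ℕ) = 1 := by omega
        calc pmul A (algPow A (k + 1)) (algPow A (j + 1 + 1 - k))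
            ≤ pmul A (algPow A (j + 1)) (algPow A (j + 1 + 1 - k)) := pmul_mono A h1 le_rfl
          _ ≤ algPow A (j + 1 + (j + 1 + 1 - (k : ℕ))) := pmul_algPow_le A (by omega) (by omega)
          _ = algPow A (j + 2) := by rw [h2]
      · have hk' : (k : ℕ) ≤ j := by have := k.isLt; omega
        have h2 : algPow A (j + 1 + 1 - k) ≤ algPow A (j + 1 - k) := by
          have h := ih (j + 1 - k) (by omega) (by omega)
          rw [show j + 1 + 1 - (k : ℕ) = (j + 1 - (k : ℕ)) + 1 by omega]
          exact h
        calc pmul A (algPow A (k + 1)) (algPow A (j + 1 + 1 - k))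
            ≤ pmul A (algPow A (k + 1)) (algPow A (j + 1 - k)) := pmul_mono A le_rfl h2
          _ ≤ algPow A ((k : ℕ) + 1 + (j + 1 - (k : ℕ))) := pmul_algPow_le A (by omega) (by omega)
          _ = algPow A (j + 2) := by congr 1; omega

lemma algPow_le_of_le {i j : ℕ} (hi : 1 ≤ i) (hij : i ≤ j) : algPow A j ≤ algPow A i := by
  induction j with
  | zero => omega
  | succ j ihj =>
    rcases Nat.lt_or_ge i (j + 1) with h | h
    · exact le_trans (algPow_succ_le A j (by omega)) (ihj (by omega))
    · have : i = j + 1 := by omega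
      rw [this]

/-- `epow x i = x^i` (with `epow x 0 = 0` as junk). -/
def epow (x : A) : ℕ → A
  | 0 => 0
  | 1 => x
  | (i + 2) => epow x (i + 1) * x

lemma epow_succ (x : A) (i : ℕ) (hi : 1 ≤ i) : epow A x (i + 1) = epow A x i * x := by
  match i, hi with
  | (j + 1), _ => rfl

lemma epow_add (x : A) : ∀ i j, 1 ≤ i → 1 ≤ j →
    epow A x i * epow A x j = epow A x (i + j) := by
  intro i j hi hj
  induction j with
  | zero => omega
  | succ j ihj =>
    rcases Nat.lt_or_ge 1 (j + 1) with h | h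
    · rw [epow_succ A x j (by omega), ← mul_assoc, ihj (by omega),
        ← epow_succ A x (i + j) (by omega), Nat.add_assoc]
    · have : j = 0 := by omega
      subst this
      rw [show epow A x 1 = x from rfl, ← epow_succ A x i hi]

lemma epow_mem (x : A) : ∀ i, 1 ≤ i → epow A x i ∈ algPow A i := by
  intro i hi
  induction i with
  | zero => omega
  | succ i ihi =>
    rcases Nat.lt_or_ge 1 (i + 1) with h | h
    · rw [epow_succ A x i (by omega)]
      refine pmul_algPow_le A (a := i) (b := 1) (by omega) le_rfl ?_
      exact mem_pmul A (ihi (by omega)) (by rw [algPow_one]; trivial)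
    · have : i = 0 := by omega
      subst this
      rw [algPow_one]; trivial

lemma epow_eq_zero_of_ge (x : A) {m : ℕ} (hm : 1 ≤ m) (h0 : epow A x m = 0) :
    ∀ m', m ≤ m' → epow A x m' = 0 := by
  intro m' hm'
  induction m' with
  | zero => omega
  | succ m' ih =>
    rcases Nat.lt_or_ge m (m' + 1) with h | h
    · rw [epow_succ A x m' (by omega), ih (by omega), zero_mul]
    · have : m = m' + 1 := by omega
      rw [← this]; exact h0

lemma key (n : ℕ) (hn : 1 ≤ n) [FiniteDimensional ℂ A] (hdim : Module.finrank ℂ A = n)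
    (hnf : NullFiliform A n) {x : A} (hx : x ∉ algPow A 2) :
    ∀ i, 1 ≤ i → algPow A i = (Submodule.span ℂ {epow A x i}) ⊔ algPow A (i + 1) := by
  intro i
  induction i using Nat.strong_induction_on with
  | _ i ih =>
    intro hi
    match i, hi with
    | 1, _ =>
      rw [algPow_one]
      have hrk2 : Module.finrank ℂ (algPow A 2) = n - 1 := by
        have := hnf 2 (by omega) (by omega); omega
      set S : Submodule ℂ A := Submodule.span ℂ {epow A x 1} ⊔ algPow A 2 with hS
      have hxS : x ∈ S :=
        Submodule.mem_sup_left (Submodule.mem_span_singleton_self (epow A x 1))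
      have hlt : algPow A 2 < S := by
        refine lt_of_le_of_ne le_sup_right fun h => hx ?_
        rw [h]; exact hxS
      have h1 : Module.finrank ℂ (algPow A 2) < Module.finrank ℂ S :=
        Submodule.finrank_lt_finrank_of_lt hlt
      have h2 : Module.finrank ℂ S ≤ n := hdim ▸ Submodule.finrank_le S
      have h3 : Module.finrank ℂ S = Module.finrank ℂ A := by omega
      exact (Submodule.eq_top_of_finrank_eq h3).symm
    | (m + 2), _ =>
      have hres : ∀ a b : ℕ, 1 ≤ a → 1 ≤ b → a + b = m + 2 → a ≤ m + 1 → b ≤ m + 1 →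
          pmul A (algPow A a) (algPow A b) ≤
            Submodule.span ℂ {epow A x (m + 2)} ⊔ algPow A (m + 3) := by
        intro a b ha hb hab ham hbm
        rw [ih a (by omega) ha, ih b (by omega) hb]
        refine (pmul_le A).2 ?_
        intro u hu v hv
        obtain ⟨u1, hu1, u2, hu2, rfl⟩ := Submodule.mem_sup.1 hu
        obtain ⟨v1, hv1, v2, hv2, rfl⟩ := Submodule.mem_sup.1 hv
        have expand : (u1 + u2) * (v1 + v2) = u1 * v1 + (u1 * v2 + u2 * v1 + u2 * v2) := by
          rw [add_mul, mul_add, mul_add]; abel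
        rw [expand]
        have t1 : u1 * v1 ∈ Submodule.span ℂ {epow A x (m + 2)} := by
          obtain ⟨c, rfl⟩ := Submodule.mem_span_singleton.1 hu1
          obtain ⟨d, rfl⟩ := Submodule.mem_span_singleton.1 hv1
          refine Submodule.mem_span_singleton.2 ⟨c * d, ?_⟩
          rw [smul_mul_assoc, mul_smul_comm, smul_smul,
            epow_add A x a b ha hb, hab]
        have hu1' : u1 ∈ algPow A a :=
          Submodule.span_le.2 (Set.singleton_subset_iff.2 (epow_mem A x a ha)) hu1
        have hv1' : v1 ∈ algPow A b :=
          Submodule.span_le.2 (Set.singleton_subset_iff.2 (epow_mem A x b hb)) hv1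
        have t2 : u1 * v2 ∈ algPow A (m + 3) := by
          have h := pmul_algPow_le A (a := a) (b := b + 1) ha (by omega)
            (mem_pmul A hu1' hv2)
          rwa [show a + (b + 1) = m + 3 by omega] at h
        have t3 : u2 * v1 ∈ algPow A (m + 3) := by
          have h := pmul_algPow_le A (a := a + 1) (b := b) (by omega) hb
            (mem_pmul A hu2 hv1')
          rwa [show a + 1 + b = m + 3 by omega] at h
        have t4 : u2 * v2 ∈ algPow A (m + 3) := by
          have h := pmul_algPow_le A (a := a + 1) (b := b + 1) (by omega) (by omega)
            (mem_pmul A hu2 hv2)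
          exact algPow_le_of_le A (i := m + 3) (j := a + 1 + (b + 1)) (by omega) (by omega) h
        exact Submodule.add_mem _ (Submodule.mem_sup_left t1)
          (Submodule.mem_sup_right (Submodule.add_mem _ (Submodule.add_mem _ t2 t3) t4))
      refine le_antisymm ?_ ?_
      · rw [algPow_succ']
        apply iSup_le
        intro k
        exact hres ((k : ℕ) + 1) (m + 1 - (k : ℕ)) (by omega) (by have := k.isLt; omega)
          (by have := k.isLt; omega) (by have := k.isLt; omega) (by omega)
      · refine sup_le ?_ (algPow_succ_le A (m + 2) (by omega))
        exact Submodule.span_le.2 (Set.singleton_subset_iff.2 (epow_mem A x (m + 2) (by omega)))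

lemma exists_nf_basis (n : ℕ) (hn : 1 ≤ n) [FiniteDimensional ℂ A]
    (hdim : Module.finrank ℂ A = n) (hnf : NullFiliform A n) :
    ∃ e : ℕ → A, IsBasisFam A n e ∧ NullFiliformTable A n e := by
  have hbot : algPow A (n + 1) = ⊥ := by
    have h := hnf (n + 1) (by omega) (by omega)
    rw [show n + 1 - (n + 1) = 0 by omega] at h
    exact Submodule.finrank_eq_zero.1 h
  have hne : algPow A 2 ≠ ⊤ := by
    intro h
    have h2 := hnf 2 (by omega) (by omega)
    rw [h, finrank_top ℂ A] at h2
    omega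
  obtain ⟨x, hx⟩ : ∃ x : A, x ∉ algPow A 2 := by
    by_contra h; push_neg at h
    exact hne (Submodule.eq_top_iff'.2 h)
  have hkey := key A n hn hdim hnf hx
  have hx0 : epow A x (n + 1) = 0 := by
    have h := epow_mem A x (n + 1) (by omega)
    rw [hbot] at h; simpa using h
  have hspan : Submodule.span ℂ (Set.range fun i : Fin n => epow A x (i.1 + 1)) = ⊤ := by
    have main : ∀ j, j ≤ n → algPow A (n + 1 - j) ≤
        Submodule.span ℂ (Set.range fun i : Fin n => epow A x (i.1 + 1)) := by
      intro j
      induction j with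
      | zero => intro _; rw [show n + 1 - 0 = n + 1 from rfl, hbot]; exact bot_le
      | succ j ihj =>
        intro hj
        have h1 : (1 : ℕ) ≤ n - j := by omega
        have heq := hkey (n - j) h1
        rw [show n + 1 - (j + 1) = n - j by omega, heq]
        refine sup_le ?_ ?_
        · refine Submodule.span_le.2 (Set.singleton_subset_iff.2 ?_)
          refine Submodule.subset_span ⟨⟨n - j - 1, by omega⟩, ?_⟩
          show epow A x (n - j - 1 + 1) = epow A x (n - j)
          rw [show n - j - 1 + 1 = n - j by omega]
        · rw [show n - j + 1 = n + 1 - j by omega]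
          exact ihj (by omega)
    have h := main n le_rfl
    rw [show n + 1 - n = 1 by omega, algPow_one] at h
    exact le_antisymm le_top h
  have hind : LinearIndependent ℂ fun i : Fin n => epow A x (i.1 + 1) :=
    linearIndependent_of_top_le_span_of_card_eq_finrank (le_of_eq hspan.symm)
      (by simp [hdim])
  refine ⟨epow A x, ⟨hind, hspan⟩, ?_⟩
  intro i j hi1 hin hj1 hjn
  rw [epow_add A x i j hi1 hj1]
  split_ifs with h
  · rfl
  · exact epow_eq_zero_of_ge A x (by omega) hx0 (i + j) (by omega)

end Aux

/-- an `n`-dimensional (`n ≥ 1`) nilpotent null-filiform complex associative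
algebra has a basis `e_1,…,e_n` with `e_i e_j = e_{i+j}` (`i+j ≤ n`) and `e_i e_j = 0`
(`i+j > n`); in particular any two such algebras of the same dimension are isomorphic. -/
theorem null_filiform_classification (n : ℕ) (hn : 1 ≤ n) [FiniteDimensional ℂ A]
    (hdim : Module.finrank ℂ A = n) (hnil : IsNilpotentAlg A) (hnf : NullFiliform A n) :
    (∃ e : ℕ → A, IsBasisFam A n e ∧ NullFiliformTable A n e) ∧
    ∀ (B : Type*) [NonUnitalRing B] [Module ℂ B] [SMulCommClass ℂ B B]
      [IsScalarTower ℂ B B] [FiniteDimensional ℂ B],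
      Module.finrank ℂ B = n → IsNilpotentAlg B → NullFiliform B n →
      ∃ φ : A ≃ₗ[ℂ] B, ∀ x y : A, φ (x * y) = φ x * φ y := by
  refine ⟨exists_nf_basis A n hn hdim hnf, ?_⟩
  intro B _ _ _ _ _ hdimB hnilB hnfB
  obtain ⟨e, ⟨hei, hes⟩, het⟩ := exists_nf_basis A n hn hdim hnf
  obtain ⟨f, ⟨hfi, hfs⟩, hft⟩ := exists_nf_basis B n hn hdimB hnfB
  let bA : Module.Basis (Fin n) ℂ A := Module.Basis.mk hei (le_of_eq hes.symm)
  let bB : Module.Basis (Fin n) ℂ B := Module.Basis.mk hfi (le_of_eq hfs.symm)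
  let φ : A ≃ₗ[ℂ] B := bA.equiv bB (Equiv.refl _)
  refine ⟨φ, ?_⟩
  have hbA : ∀ k : Fin n, bA k = e (k.1 + 1) := fun k => Module.Basis.mk_apply _ _ k
  have hbB : ∀ k : Fin n, bB k = f (k.1 + 1) := fun k => Module.Basis.mk_apply _ _ k
  have hb : ∀ k : Fin n, φ (bA k) = bB k := fun k => bA.equiv_apply k bB (Equiv.refl _)
  have hbasis : ∀ i j : Fin n, φ (bA i * bA j) = φ (bA i) * φ (bA j) := by
    intro i j
    have hilt := i.isLt
    have hjlt := j.isLt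
    rw [hb i, hb j, hbA, hbA, hbB, hbB,
      het (i.1 + 1) (j.1 + 1) (by omega) (by omega) (by omega) (by omega),
      hft (i.1 + 1) (j.1 + 1) (by omega) (by omega) (by omega) (by omega)]
    by_cases h : i.1 + 1 + (j.1 + 1) ≤ n
    · rw [if_pos h, if_pos h]
      have hlt : i.1 + j.1 + 1 < n := by omega
      have h1 : e (i.1 + 1 + (j.1 + 1)) = bA ⟨i.1 + j.1 + 1, hlt⟩ := by
        rw [hbA]
        show e _ = e (i.1 + j.1 + 1 + 1)
        rw [show i.1 + 1 + (j.1 + 1) = i.1 + j.1 + 1 + 1 by omega]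
      have h2 : f (i.1 + 1 + (j.1 + 1)) = bB ⟨i.1 + j.1 + 1, hlt⟩ := by
        rw [hbB]
        show f _ = f (i.1 + j.1 + 1 + 1)
        rw [show i.1 + 1 + (j.1 + 1) = i.1 + j.1 + 1 + 1 by omega]
      rw [h1, h2, hb]
    · rw [if_neg h, if_neg h, map_zero]
  have hext : (LinearMap.mul ℂ A).compr₂ (φ : A →ₗ[ℂ] B)
      = (LinearMap.mul ℂ B).compl₁₂ (φ : A →ₗ[ℂ] B) (φ : A →ₗ[ℂ] B) := by
    apply bA.ext
    intro i
    apply bA.ext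
    intro j
    simp only [LinearMap.compr₂_apply, LinearMap.compl₁₂_apply, LinearMap.mul_apply',
      LinearEquiv.coe_coe]
    exact hbasis i j
  intro x y
  have h := LinearMap.congr_fun (LinearMap.congr_fun hext x) y
  simpa using h
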